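/- Let p be an odd prime and f ≥ 1, e ≥ 1 integers, and let c_0, …, c_{2f−1} be integers with 0 ≤ c_i ≤ p−1 (indices modulo 2f). Let J ⊆ ℤ/2fℤ satisfy (i ∈ J if and only if i+f ∈ J) for all i, and let x_0, …, x_{2f−1} be integers with x_i + x_{i+f} = e for all i. Then t := Ψ(J,x) satisfies (p^f+1)·t ≡ e·(p + p^2 + ⋯ + p^{2f}) + (p^f+1)·C (mod p^{2f}−1). -/

import Mathlib

/-- `C := Σ_{i=0}^{2f−1} p^{2f−i} c_i`, encoding the character `χ̄ = ∏ η_i^{c_i}`. -/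
def Cconst (p f : ℕ) (c : ZMod (2 * f) → ℤ) : ℤ :=
  ∑ i ∈ Finset.range (2 * f), (p : ℤ) ^ (2 * f - i) * c (i : ZMod (2 * f))

/-- `Ψ(J,x) := Σ_{i∈J} p^{2f−i} c_i + Σ_{i∉J} p^{2f−i} c_{i+f} + Σ_i p^{2f−i} x_i`. -/
def Psi (p f : ℕ) (c : ZMod (2 * f) → ℤ) (J : Finset (ZMod (2 * f)))
    (x : ZMod (2 * f) → ℤ) : ℤ :=
  (∑ i ∈ Finset.range (2 * f),
      if (i : ZMod (2 * f)) ∈ J then (p : ℤ) ^ (2 * f - i) * c (i : ZMod (2 * f))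
      else (p : ℤ) ^ (2 * f - i) * c ((i : ZMod (2 * f)) + (f : ZMod (2 * f)))) +
  ∑ i ∈ Finset.range (2 * f), (p : ℤ) ^ (2 * f - i) * x (i : ZMod (2 * f))

private lemma modEq_sum' {n : ℤ} (s : Finset ℕ) (F G : ℕ → ℤ)
    (h : ∀ i ∈ s, F i ≡ G i [ZMOD n]) :
    (∑ i ∈ s, F i) ≡ (∑ i ∈ s, G i) [ZMOD n] := by
  classical
  induction s using Finset.induction_on with
  | empty => rfl
  | insert a s' hns ih =>
    rw [Finset.sum_insert hns, Finset.sum_insert hns]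
    exact (h a (Finset.mem_insert_self a s')).add
      (ih fun i hi => h i (Finset.mem_insert_of_mem hi))

/-- reindexing a sum over `range (2f)` by the involution `i ↦ (i+f) % (2f)` -/
private lemma sum_shift (f : ℕ) (hf : 1 ≤ f) (g : ℕ → ℤ) :
    ∑ i ∈ Finset.range (2 * f), g ((i + f) % (2 * f)) = ∑ i ∈ Finset.range (2 * f), g i := by
  have hinv : ∀ a < 2 * f, ((a + f) % (2 * f) + f) % (2 * f) = a := by
    intro a ha
    rcases lt_or_ge a f with h | h
    · rw [Nat.mod_eq_of_lt (show a + f < 2 * f by omega), Nat.mod_eq_sub_mod (by omega),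
        show a + f + f - 2 * f = a from by omega, Nat.mod_eq_of_lt ha]
    · rw [Nat.mod_eq_sub_mod (show 2 * f ≤ a + f by omega),
        Nat.mod_eq_of_lt (show a + f - 2 * f < 2 * f by omega),
        show a + f - 2 * f + f = a from by omega, Nat.mod_eq_of_lt ha]
  refine Finset.sum_nbij' (fun i => (i + f) % (2 * f)) (fun i => (i + f) % (2 * f))
    ?_ ?_ ?_ ?_ ?_
  · intro a _; exact Finset.mem_range.mpr (Nat.mod_lt _ (by omega))
  · intro a _; exact Finset.mem_range.mpr (Nat.mod_lt _ (by omega))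
  · intro a ha; exact hinv a (Finset.mem_range.mp ha)
  · intro a ha; exact hinv a (Finset.mem_range.mp ha)
  · intro a _; rfl

/-- if `i ∈ J ↔ i+f ∈ J` for all `i` and `x_i + x_{i+f} = e` for all `i`,
then `t := Ψ(J,x)` satisfies `(p^f+1)t ≡ e(p + p² + ⋯ + p^{2f}) + (p^f+1)C (mod p^{2f}−1)`. -/
theorem stmt_7 (p f e : ℕ) (hp : p.Prime) (hodd : Odd p) (hf : 1 ≤ f) (he : 1 ≤ e)
    (c : ZMod (2 * f) → ℤ) (hc : ∀ i, 0 ≤ c i ∧ c i ≤ (p : ℤ) - 1)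
    (J : Finset (ZMod (2 * f))) (hJ : ∀ i, i ∈ J ↔ i + (f : ZMod (2 * f)) ∈ J)
    (x : ZMod (2 * f) → ℤ) (hx : ∀ i, x i + x (i + (f : ZMod (2 * f))) = (e : ℤ)) :
    ((p : ℤ) ^ f + 1) * Psi p f c J x ≡
      (e : ℤ) * (∑ j ∈ Finset.Icc 1 (2 * f), (p : ℤ) ^ j) + ((p : ℤ) ^ f + 1) * Cconst p f c
      [ZMOD ((p : ℤ) ^ (2 * f) - 1)] := by
  set q : ℤ := (p : ℤ) with hq
  set N : ℤ := q ^ (2 * f) - 1 with hN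
  have hmod : q ^ (2 * f) ≡ 1 [ZMOD N] := Int.modEq_iff_dvd.mpr ⟨-1, by ring⟩
  -- key congruence for exponents
  have key : ∀ i ∈ Finset.range (2 * f),
      q ^ f * q ^ (2 * f - i) ≡ q ^ (2 * f - (i + f) % (2 * f)) [ZMOD N] := by
    intro i hi
    have hi' : i < 2 * f := Finset.mem_range.mp hi
    rcases lt_or_ge i f with h | h
    · have h1 : (i + f) % (2 * f) = i + f := Nat.mod_eq_of_lt (by omega)
      rw [h1, ← pow_add, show f + (2 * f - i) = 2 * f + (2 * f - (i + f)) from by omega,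
        pow_add]
      simpa using hmod.mul_right (q ^ (2 * f - (i + f)))
    · have h1 : (i + f) % (2 * f) = i - f := by
        rw [Nat.mod_eq_sub_mod (by omega), show i + f - 2 * f = i - f from by omega,
          Nat.mod_eq_of_lt (by omega)]
      rw [h1, ← pow_add, show f + (2 * f - i) = 2 * f - (i - f) from by omega]
  -- value functions
  set v : ℕ → ℤ := fun i =>
    (if (i : ZMod (2 * f)) ∈ J then c (i : ZMod (2 * f))
      else c ((i : ZMod (2 * f)) + (f : ZMod (2 * f)))) + x (i : ZMod (2 * f)) with hv
  have hPsi : Psi p f c J x = ∑ i ∈ Finset.range (2 * f), q ^ (2 * f - i) * v i := by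
    rw [Psi, ← Finset.sum_add_distrib]
    refine Finset.sum_congr rfl fun i _ => ?_
    simp only [hv]; split_ifs <;> ring
  have hff : (f : ZMod (2 * f)) + (f : ZMod (2 * f)) = 0 := by
    have : ((2 * f : ℕ) : ZMod (2 * f)) = 0 := ZMod.natCast_self _
    push_cast at this; linear_combination this
  have hcast : ∀ i : ℕ, (((i + f) % (2 * f) : ℕ) : ZMod (2 * f))
      = (i : ZMod (2 * f)) + (f : ZMod (2 * f)) := by
    intro i; rw [ZMod.natCast_mod]; push_cast; ring
  -- shifted value
  have hvshift : ∀ i : ℕ, v ((i + f) % (2 * f)) =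
      (if (i : ZMod (2 * f)) ∈ J then c ((i : ZMod (2 * f)) + (f : ZMod (2 * f)))
        else c (i : ZMod (2 * f))) + x ((i : ZMod (2 * f)) + (f : ZMod (2 * f))) := by
    intro i
    simp only [hv, hcast i]
    by_cases hm : (i : ZMod (2 * f)) ∈ J
    · have hm' : (i : ZMod (2 * f)) + (f : ZMod (2 * f)) ∈ J := (hJ _).mp hm
      simp [hm, hm']
    · have hm' : ¬((i : ZMod (2 * f)) + (f : ZMod (2 * f)) ∈ J) := fun h => hm ((hJ _).mpr h)
      simp [hm, hm', add_assoc, hff]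
  -- Ψ' and C'
  set Psi' : ℤ := ∑ i ∈ Finset.range (2 * f), q ^ (2 * f - i) * v ((i + f) % (2 * f)) with hPsi'
  set C' : ℤ := ∑ i ∈ Finset.range (2 * f),
      q ^ (2 * f - i) * c ((i : ZMod (2 * f)) + (f : ZMod (2 * f))) with hC'
  have h1 : q ^ f * Psi p f c J x ≡ Psi' [ZMOD N] := by
    rw [hPsi, Finset.mul_sum, hPsi']
    have := sum_shift f hf (fun j => q ^ (2 * f - j) * v ((j + f) % (2 * f)))
    rw [← this]
    refine modEq_sum' _ _ _ fun i hi => ?_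
    have hi' : i < 2 * f := Finset.mem_range.mp hi
    have h2 : (((i + f) % (2 * f)) + f) % (2 * f) = i := by
      rcases lt_or_ge i f with h | h
      · rw [Nat.mod_eq_of_lt (show i + f < 2*f by omega), Nat.mod_eq_sub_mod (by omega),
          show i + f + f - 2 * f = i from by omega, Nat.mod_eq_of_lt hi']
      · rw [Nat.mod_eq_sub_mod (show 2*f ≤ i + f by omega),
          Nat.mod_eq_of_lt (show i + f - 2*f < 2*f by omega),
          show i + f - 2 * f + f = i from by omega, Nat.mod_eq_of_lt hi']
    rw [h2, ← mul_assoc]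
    exact (key i hi).mul_right (v i)
  have h1C : q ^ f * Cconst p f c ≡ C' [ZMOD N] := by
    rw [Cconst, Finset.mul_sum, hC']
    have := sum_shift f hf
      (fun j => q ^ (2 * f - j) * c ((j : ZMod (2*f)) + (f : ZMod (2*f))))
    rw [← this]
    refine modEq_sum' _ _ _ fun i hi => ?_
    rw [hcast i, add_assoc, hff, add_zero, ← mul_assoc]
    exact (key i hi).mul_right _
  -- the exact integer identity
  have hS : (∑ j ∈ Finset.Icc 1 (2 * f), q ^ j) = ∑ i ∈ Finset.range (2 * f), q ^ (2 * f - i) := by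
    rw [show Finset.Icc 1 (2 * f) = Finset.Ico 1 (2 * f + 1) from rfl]
    rw [Finset.sum_Ico_eq_sum_range]
    have := Finset.sum_range_reflect (fun j => q ^ (1 + j)) (2 * f)
    rw [show 2 * f + 1 - 1 = 2 * f from rfl] at *
    rw [← this]
    exact Finset.sum_congr rfl fun i hi => by
      have := Finset.mem_range.mp hi
      congr 1; omega
  have h3 : Psi p f c J x + Psi' =
      (e : ℤ) * (∑ j ∈ Finset.Icc 1 (2 * f), q ^ j) + (Cconst p f c + C') := by
    rw [hPsi, hPsi', hS, Cconst, hC', Finset.mul_sum, ← Finset.sum_add_distrib,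
      ← Finset.sum_add_distrib, ← Finset.sum_add_distrib]
    refine Finset.sum_congr rfl fun i hi => ?_
    rw [hvshift i]
    simp only [hv]
    have := hx (i : ZMod (2 * f))
    split_ifs <;> linear_combination (q ^ (2 * f - i)) * this
  calc (q ^ f + 1) * Psi p f c J x = q ^ f * Psi p f c J x + Psi p f c J x := by ring
    _ ≡ Psi' + Psi p f c J x [ZMOD N] := h1.add_right _
    _ = (e : ℤ) * (∑ j ∈ Finset.Icc 1 (2 * f), q ^ j) + (Cconst p f c + C') := by
        linarith [h3]
    _ ≡ (e : ℤ) * (∑ j ∈ Finset.Icc 1 (2 * f), q ^ j)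
        + (Cconst p f c + q ^ f * Cconst p f c) [ZMOD N] :=
        (Int.ModEq.add_left _ h1C.symm).add_left _
    _ = (e : ℤ) * (∑ j ∈ Finset.Icc 1 (2 * f), q ^ j) + (q ^ f + 1) * Cconst p f c := by ring
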